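/- arXiv:1905.05066 — 4 statements merged into one kernel-verified Lean document; each statement's English description precedes it below -/
import Mathlib

section
/- Let C_opt be a color-spanning circle of radius 1 through q, centered at c on a line L through q. Suppose ℓ is another line through q making angle θ ≤ ε ≤ 1 with L. Then there exists a disk centered on ℓ, containing C_opt (hence color-spanning) with q on or inside its boundary, of radius at most 1 + ε. Formally: given dist(c,q) = 1 and a line ℓ through q with angle θ ≤ ε to the line qc, the disk centered at the projection of c onto ℓ with radius 1 + sin θ ≤ 1 + ε contains the closed disk B(c,1). -/
theorem stmt7 (c q v d : EuclideanSpace ℝ (Fin 2)) (θ ε : ℝ)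
    (hθ0 : 0 ≤ θ) (hθε : θ ≤ ε) (hε : ε ≤ 1)
    (hcq : dist c q = 1) (hv : ‖v‖ = 1)
    (hangle : |(inner ℝ (c - q) v : ℝ)| = Real.cos θ)
    (hd : d = q + (inner ℝ (c - q) v : ℝ) • v) :
    (∀ p : EuclideanSpace ℝ (Fin 2), dist p c ≤ 1 → dist p d ≤ 1 + Real.sin θ) ∧
    1 + Real.sin θ ≤ 1 + ε := by
  have hsin : 0 ≤ Real.sin θ :=
    Real.sin_nonneg_of_nonneg_of_le_pi hθ0 (by linarith [Real.pi_gt_three])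
  set t : ℝ := inner ℝ (c - q) v with ht
  have hcd : dist c d = Real.sin θ := by
    have h1 : c - d = (c - q) - t • v := by rw [hd]; abel
    have h2 : ‖c - d‖ ^ 2 = Real.sin θ ^ 2 := by
      rw [h1, norm_sub_sq_real, real_inner_smul_right, norm_smul, ← ht]
      have hcq' : ‖c - q‖ = 1 := by rwa [← dist_eq_norm]
      have habs : |t| ^ 2 = Real.cos θ ^ 2 := by rw [hangle]
      have : |t| ^ 2 = t ^ 2 := sq_abs t
      rw [Real.sin_sq, hcq', hv, Real.norm_eq_abs]
      nlinarith [sq_abs t, habs]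
    rw [dist_eq_norm]
    nlinarith [norm_nonneg (c - d), hsin]
  constructor
  · intro p hp
    calc dist p d ≤ dist p c + dist c d := dist_triangle p c d
      _ ≤ 1 + Real.sin θ := by rw [hcd]; linarith
  · have : Real.sin θ ≤ θ := Real.sin_le hθ0
    linarith
end

section
/- Let P be a finite set of points on the real line with a surjective coloring c : P → Fin k, and let q ∈ ℝ be a query point. Then a minimum-length color-spanning interval containing q either (a) contains q strictly in its interior and is a minimal color-spanning interval of P (both of whose endpoints are in P), or (b) has q as one of its endpoints, with the other endpoint a point of P. In particular, the optimum length equals the minimum of: min over minimal color-spanning intervals [a,b] with a ≤ q ≤ b of (b-a), and min over points p ∈ P of the length of the smallest color-spanning interval with one endpoint q extending to include a minimal color-spanning interval ending/starting at p, i.e., min over p ≤ q of (end(p) + (q - p)) and min over p ≥ q of (start(p) + (p - q)), where end(p) (resp. start(p)) is the length of the smallest color-spanning interval ending (resp. starting) at p. -/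
theorem stmt16 (k : ℕ) (P : Finset ℝ) (col : ℝ → Fin k)
    (hsurj : ∀ i : Fin k, ∃ p ∈ P, col p = i) (q : ℝ) :
    ∃ a b : ℝ, a ≤ q ∧ q ≤ b ∧
      (∀ i : Fin k, ∃ p ∈ P, col p = i ∧ a ≤ p ∧ p ≤ b) ∧
      (∀ a' b' : ℝ, a' ≤ q → q ≤ b' →
        (∀ i : Fin k, ∃ p ∈ P, col p = i ∧ a' ≤ p ∧ p ≤ b') → b - a ≤ b' - a') ∧
      ((a ∈ P ∧ b ∈ P) ∨ (a = q ∧ b ∈ P) ∨ (b = q ∧ a ∈ P)) := by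
  classical
  set S : Finset ℝ := P ∪ {q} with hS
  have hSne : S.Nonempty := ⟨q, by simp [hS]⟩
  set T : Finset (ℝ × ℝ) := (S ×ˢ S).filter
      (fun ab => ab.1 ≤ q ∧ q ≤ ab.2 ∧
        ∀ i : Fin k, ∃ p ∈ P, col p = i ∧ ab.1 ≤ p ∧ p ≤ ab.2) with hT
  have hTne : T.Nonempty := by
    refine ⟨(S.min' hSne, S.max' hSne), ?_⟩
    simp only [hT, Finset.mem_filter, Finset.mem_product]
    refine ⟨⟨S.min'_mem hSne, S.max'_mem hSne⟩, S.min'_le q (by simp [hS]),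
      S.le_max' q (by simp [hS]), ?_⟩
    intro i
    obtain ⟨p, hp, hc⟩ := hsurj i
    exact ⟨p, hp, hc, S.min'_le p (by simp [hS, hp]), S.le_max' p (by simp [hS, hp])⟩
  obtain ⟨ab, habT, hmin⟩ := T.exists_min_image (fun ab => ab.2 - ab.1) hTne
  have hmem := habT
  rw [hT, Finset.mem_filter, Finset.mem_product] at hmem
  obtain ⟨⟨haS, hbS⟩, haq, hqb, hspan⟩ := hmem
  refine ⟨ab.1, ab.2, haq, hqb, hspan, ?_, ?_⟩
  · intro a' b' ha' hb' hsp'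
    set A : Finset ℝ := (P.filter fun p => a' ≤ p ∧ p ≤ b') ∪ {q} with hA
    have hAne : A.Nonempty := ⟨q, by simp [hA]⟩
    have hqA : q ∈ A := by simp [hA]
    have hAS : A ⊆ S := by
      intro x hx
      simp only [hA, Finset.mem_union, Finset.mem_filter, Finset.mem_singleton] at hx
      rcases hx with ⟨hx, _⟩ | rfl
      · exact Finset.mem_union_left _ hx
      · simp [hS]
    have hlb : ∀ x ∈ A, a' ≤ x := by
      intro x hx
      simp only [hA, Finset.mem_union, Finset.mem_filter, Finset.mem_singleton] at hx
      rcases hx with ⟨_, h1, _⟩ | rfl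
      · exact h1
      · exact ha'
    have hub : ∀ x ∈ A, x ≤ b' := by
      intro x hx
      simp only [hA, Finset.mem_union, Finset.mem_filter, Finset.mem_singleton] at hx
      rcases hx with ⟨_, _, h2⟩ | rfl
      · exact h2
      · exact hb'
    have hTmem : (A.min' hAne, A.max' hAne) ∈ T := by
      rw [hT, Finset.mem_filter, Finset.mem_product]
      refine ⟨⟨hAS (A.min'_mem hAne), hAS (A.max'_mem hAne)⟩,
        A.min'_le q hqA, A.le_max' q hqA, ?_⟩
      intro i
      obtain ⟨p, hp, hc, h1, h2⟩ := hsp' i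
      have hpA : p ∈ A := by
        simp only [hA, Finset.mem_union, Finset.mem_filter]
        exact Or.inl ⟨hp, h1, h2⟩
      exact ⟨p, hp, hc, A.min'_le p hpA, A.le_max' p hpA⟩
    have h1 := hmin _ hTmem
    have h2 := hlb _ (A.min'_mem hAne)
    have h3 := hub _ (A.max'_mem hAne)
    simp only at h1
    linarith
  · have hqP : ab.1 = q → ab.2 = q → q ∈ P := by
      intro h1 h2
      obtain ⟨p, hp, _, hl, hr⟩ := hspan (col q)
      rw [h1] at hl; rw [h2] at hr
      have : p = q := le_antisymm hr hl
      rwa [this] at hp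
    rw [hS, Finset.mem_union, Finset.mem_singleton] at haS hbS
    rcases haS with haP | haq'
    · rcases hbS with hbP | hbq'
      · exact Or.inl ⟨haP, hbP⟩
      · exact Or.inr (Or.inr ⟨hbq', haP⟩)
    · rcases hbS with hbP | hbq'
      · exact Or.inr (Or.inl ⟨haq', hbP⟩)
      · exact Or.inl ⟨by rw [haq']; exact hqP haq' hbq', by rw [hbq']; exact hqP haq' hbq'⟩
end

section
/- Let z = (α, β₁) and z' = (α, β₂) with β₁ ≥ β₂ ≥ 0, and let p = (x_p, y_p), r = (x_r, y_r) be two points with y_p ≥ y_r ≥ β₁. If dist(z', p) ≤ dist(z', r) then dist(z, p) ≤ dist(z, r). (Moving the reference point upward along a vertical line, while staying below both points, preserves the property that the higher point is at most as far as the lower point.) -/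
theorem stmt17 (p r z z' : EuclideanSpace ℝ (Fin 2)) (hx : z 0 = z' 0)
    (h1 : r 1 ≤ p 1) (h2 : z 1 ≤ r 1) (h3 : z' 1 ≤ z 1) (h4 : 0 ≤ z' 1)
    (hd : dist z' p ≤ dist z' r) : dist z p ≤ dist z r := by
  simp only [EuclideanSpace.dist_eq, Fin.sum_univ_two, Real.dist_eq, sq_abs] at hd ⊢
  apply Real.sqrt_le_sqrt
  have hd' : (z' 0 - p 0)^2 + (z' 1 - p 1)^2 ≤ (z' 0 - r 0)^2 + (z' 1 - r 1)^2 := by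
    nlinarith [Real.sq_sqrt (show (0:ℝ) ≤ (z' 0 - p 0)^2 + (z' 1 - p 1)^2 by positivity),
      Real.sq_sqrt (show (0:ℝ) ≤ (z' 0 - r 0)^2 + (z' 1 - r 1)^2 by positivity),
      Real.sqrt_nonneg ((z' 0 - p 0)^2 + (z' 1 - p 1)^2), hd]
  rw [hx]
  nlinarith [hd', h1, h2, h3]
end

section
/- Let D₁ be the closed disk of radius r₁ centered at c₁ and suppose q ∈ ℝ² satisfies dist(q, c₁) = r₁ (q is on the boundary of D₁). Let ℓ be any line through q. Then the smallest closed disk centered on ℓ containing D₁ has radius r₁·(1 + sin θ), where θ ∈ [0, π/2] is the angle between ℓ and the line through q and c₁. In particular this radius is at most r₁·(1 + θ). -/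
theorem stmt18 (c₁ q v d : EuclideanSpace ℝ (Fin 2)) (r₁ θ : ℝ) (hr : 0 < r₁)
    (hθ : θ ∈ Set.Icc 0 (Real.pi / 2)) (hcq : dist c₁ q = r₁) (hv : ‖v‖ = 1)
    (hangle : |(inner ℝ (c₁ - q) v : ℝ)| = r₁ * Real.cos θ)
    (hd : d = q + (inner ℝ (c₁ - q) v : ℝ) • v) :
    dist c₁ d = r₁ * Real.sin θ ∧
    dist d c₁ + r₁ = r₁ * (1 + Real.sin θ) ∧
    (∀ t r : ℝ, dist (q + t • v) c₁ + r₁ ≤ r → r₁ * (1 + Real.sin θ) ≤ r) ∧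
    r₁ * (1 + Real.sin θ) ≤ r₁ * (1 + θ) := by
  obtain ⟨hθ0, hθ2⟩ := hθ
  have hsin : 0 ≤ Real.sin θ := Real.sin_nonneg_of_nonneg_of_le_pi hθ0
    (hθ2.trans (by linarith [Real.pi_pos]))
  set w : EuclideanSpace ℝ (Fin 2) := c₁ - q with hw
  set p : ℝ := (inner ℝ w v : ℝ) with hp
  have hnorm : ∀ t : ℝ, ‖w - t • v‖ ^ 2 = (t - p) ^ 2 + (r₁ ^ 2 - p ^ 2) := by
    intro t
    have h1 : ‖w - t • v‖ ^ 2 = ‖w‖ ^ 2 - 2 * (inner ℝ w (t • v) : ℝ) + ‖t • v‖ ^ 2 := by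
      rw [@norm_sub_sq_real]
    have h2 : (inner ℝ w (t • v) : ℝ) = t * p := by
      rw [inner_smul_right]
    have h3 : ‖t • v‖ = |t| := by rw [norm_smul, hv, mul_one, Real.norm_eq_abs]
    have h4 : ‖w‖ = r₁ := by rw [hw, ← dist_eq_norm, hcq]
    rw [h1, h2, h3, h4, sq_abs]
    ring
  have hp2 : p ^ 2 = r₁ ^ 2 * Real.cos θ ^ 2 := by
    have := congrArg (· ^ 2) hangle
    simpa [sq_abs, mul_pow] using this
  have hrs : r₁ ^ 2 - p ^ 2 = (r₁ * Real.sin θ) ^ 2 := by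
    have := Real.sin_sq_add_cos_sq θ
    rw [hp2]; nlinarith
  have hdist : dist c₁ d = r₁ * Real.sin θ := by
    have : c₁ - d = w - p • v := by rw [hd, hw]; abel
    have h := hnorm p
    rw [dist_eq_norm, this]
    have h2 : ‖w - p • v‖ ^ 2 = (r₁ * Real.sin θ) ^ 2 := by rw [h, ← hrs]; ring
    nlinarith [norm_nonneg (w - p • v), mul_nonneg hr.le hsin]
  refine ⟨hdist, by rw [dist_comm, hdist]; ring, ?_, ?_⟩
  · intro t r htr
    have hge : r₁ * Real.sin θ ≤ dist (q + t • v) c₁ := by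
      have heq : q + t • v - c₁ = -(w - t • v) := by rw [hw]; abel
      have h := hnorm t
      rw [dist_eq_norm, heq, norm_neg]
      nlinarith [norm_nonneg (w - t • v), mul_nonneg hr.le hsin, sq_nonneg (t - p)]
    nlinarith
  · have := Real.sin_le hθ0
    nlinarith
end
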